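/- arXiv:2302.00400 — 3 statements merged into one kernel-verified Lean document; each statement's English description precedes it below -/
import Mathlib

section
/- Let M = (M_i)_{i∈I} be a POVM on ℂ^d, let λ = (λ_k)_{k=1}^K be a probability distribution, and let ρ_k be a quantum state for each k. Then the observational entropy satisfies 0 ≤ S_M(∑_k λ_k ρ_k) − ∑_k λ_k S_M(ρ_k) ≤ H(λ). -/
open scoped BigOperators ComplexOrder Classical

noncomputable section

/-- Shannon entropy of a finitely supported distribution, with `0 log 0 = 0`. -/
def shannonEntropy {ι : Type*} [Fintype ι] (p : ι → ℝ) : ℝ :=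
  -∑ i, p i * Real.log (p i)

/-- A quantum state: positive semidefinite with unit trace. -/
def IsState {n : Type*} [Fintype n] (ρ : Matrix n n ℂ) : Prop :=
  ρ.PosSemidef ∧ ρ.trace = 1

/-- A POVM: positive semidefinite elements summing to the identity. -/
def IsPOVM {ι n : Type*} [Fintype ι] [Fintype n] [DecidableEq n]
    (M : ι → Matrix n n ℂ) : Prop :=
  (∀ i, (M i).PosSemidef) ∧ ∑ i, M i = 1

/-- Observational entropy `S_M(ρ) = -∑ p_i log (p_i / V_i)`. -/
def obsEntropy {ι n : Type*} [Fintype ι] [Fintype n]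
    (M : ι → Matrix n n ℂ) (ρ : Matrix n n ℂ) : ℝ :=
  -∑ i, ((M i * ρ).trace.re * Real.log ((M i * ρ).trace.re / (M i).trace.re))

/-- The function `g(x) = -x log x + (1+x) log(1+x)`. -/
def gFun (x : ℝ) : ℝ := -(x * Real.log x) + (1 + x) * Real.log (1 + x)

/-- Trace norm of a square complex matrix. -/
def traceNorm {n : Type*} [Fintype n] [DecidableEq n] (X : Matrix n n ℂ) : ℝ :=
  (((Matrix.posSemidef_conjTranspose_mul_self X).1.eigenvectorUnitary : Matrix n n ℂ) *
    Matrix.diagonal (fun i => ((Real.sqrt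
      ((Matrix.posSemidef_conjTranspose_mul_self X).1.eigenvalues i) : ℝ) : ℂ)) *
    (star ((Matrix.posSemidef_conjTranspose_mul_self X).1.eigenvectorUnitary :
      Matrix n n ℂ))).trace.re

/-- Matrix logarithm of a Hermitian matrix via the spectral decomposition,
with the convention `log 0 = 0` on the kernel; junk value `0` on non-Hermitian input. -/
def matLog {n : Type*} [Fintype n] [DecidableEq n] (A : Matrix n n ℂ) : Matrix n n ℂ :=
  if hA : A.IsHermitian then
    (hA.eigenvectorUnitary : Matrix n n ℂ) *
      Matrix.diagonal (fun i => (Real.log (hA.eigenvalues i) : ℂ)) *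
      (star (hA.eigenvectorUnitary : Matrix n n ℂ))
  else 0

/-- Von Neumann entropy `S(ρ) = -tr(ρ log ρ)`. -/
def vnEntropy {n : Type*} [Fintype n] [DecidableEq n] (ρ : Matrix n n ℂ) : ℝ :=
  -((ρ * matLog ρ).trace.re)

/-- Quantum relative entropy, as an extended real number: `tr(μ (log μ - log ν))` when
`supp μ ⊆ supp ν` (both Hermitian), and `+∞` otherwise. -/
def qRelEntropy {n : Type*} [Fintype n] [DecidableEq n] (μ ν : Matrix n n ℂ) : EReal :=
  if μ.IsHermitian ∧ ν.IsHermitian ∧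
      LinearMap.range (Matrix.toLin' μ) ≤ LinearMap.range (Matrix.toLin' ν) then
    (((μ * (matLog μ - matLog ν)).trace.re : ℝ) : EReal)
  else ⊤

/-- Real-valued quantum relative entropy `tr(μ (log μ - log ν))` (meaningful when
`supp μ ⊆ supp ν`). -/
def qRelEntropyR {n : Type*} [Fintype n] [DecidableEq n] (μ ν : Matrix n n ℂ) : ℝ :=
  (μ * (matLog μ - matLog ν)).trace.re



lemma psd_trace_re_nonneg {n : Type*} [Fintype n] [DecidableEq n]
    {A : Matrix n n ℂ} (hA : A.PosSemidef) : 0 ≤ A.trace.re := by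
  rw [Matrix.trace]
  simp only [Complex.re_sum]
  apply Finset.sum_nonneg
  intro i _
  have := hA.re_dotProduct_nonneg (Pi.single i 1)
  simpa [Matrix.mulVec_single, dotProduct, Pi.single_apply, Matrix.diag] using this

open scoped MatrixOrder in
lemma psd_mul_trace_re_nonneg {n : Type*} [Fintype n] [DecidableEq n]
    {A B : Matrix n n ℂ} (hA : A.PosSemidef) (hB : B.PosSemidef) :
    0 ≤ (A * B).trace.re := by
  have hs : CFC.sqrt A * CFC.sqrt A = A := CFC.sqrt_mul_sqrt_self A hA.nonneg
  have hherm : (CFC.sqrt A).conjTranspose = CFC.sqrt A := (Matrix.nonneg_iff_posSemidef.mp (CFC.sqrt_nonneg A)).1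
  have hpsd : (CFC.sqrt A * B * CFC.sqrt A).PosSemidef := by
    have := hB.conjTranspose_mul_mul_same (CFC.sqrt A)
    rwa [hherm] at this
  have heq : (A * B).trace = (CFC.sqrt A * B * CFC.sqrt A).trace := by
    conv_lhs => rw [← hs]
    rw [mul_assoc, Matrix.trace_mul_comm]
  rw [heq]
  exact psd_trace_re_nonneg hpsd

lemma per_index_obs {K : ℕ} (lam p : Fin K → ℝ) (hlam0 : ∀ k, 0 ≤ lam k)
    (hlam1 : ∑ k, lam k = 1) (hp : ∀ k, 0 ≤ p k) (V : ℝ) :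
    0 ≤ ∑ k, lam k * (p k * Real.log (p k / V)) -
        (∑ k, lam k * p k) * Real.log ((∑ k, lam k * p k) / V) ∧
    ∑ k, lam k * (p k * Real.log (p k / V)) -
        (∑ k, lam k * p k) * Real.log ((∑ k, lam k * p k) / V)
      ≤ ∑ k, lam k * p k * (-Real.log (lam k)) := by
  have hlam_le : ∀ k, lam k ≤ 1 := by
    intro k
    rw [← hlam1]
    exact Finset.single_le_sum (fun j _ => hlam0 j) (Finset.mem_univ k)
  have hrhs_nonneg : 0 ≤ ∑ k, lam k * p k * (-Real.log (lam k)) := by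
    apply Finset.sum_nonneg
    intro k _
    have h1 : 0 ≤ -Real.log (lam k) := by
      simpa using Real.log_nonpos (hlam0 k) (hlam_le k)
    exact mul_nonneg (mul_nonneg (hlam0 k) (hp k)) h1
  set P := ∑ k, lam k * p k with hPdef
  have hP0 : 0 ≤ P := Finset.sum_nonneg fun k _ => mul_nonneg (hlam0 k) (hp k)
  by_cases hV : V = 0
  · subst hV
    simp only [div_zero, Real.log_zero, mul_zero, Finset.sum_const_zero, sub_zero]
    exact ⟨le_refl 0, hrhs_nonneg⟩
  have hterm : ∀ x : ℝ, x * Real.log (x / V) = x * Real.log x - x * Real.log V := by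
    intro x
    by_cases hx : x = 0
    · simp [hx]
    · rw [Real.log_div hx hV]; ring
  have hsplit : ∑ k, lam k * (p k * Real.log (p k / V)) -
      P * Real.log (P / V)
      = ∑ k, lam k * (p k * Real.log (p k)) - P * Real.log P := by
    rw [hterm P]
    have : ∑ k, lam k * (p k * Real.log (p k / V))
        = ∑ k, lam k * (p k * Real.log (p k)) - (∑ k, lam k * p k) * Real.log V := by
      rw [Finset.sum_mul, ← Finset.sum_sub_distrib]
      apply Finset.sum_congr rfl
      intro k _
      rw [hterm (p k)]; ring
    rw [this]; ring
  rw [hsplit]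
  constructor
  · have hj := Real.convexOn_mul_log.map_sum_le (t := Finset.univ) (w := lam) (p := p)
      (fun k _ => hlam0 k) (by simpa using hlam1) (fun k _ => hp k)
    simp only [smul_eq_mul] at hj
    linarith [hj]
  · rw [Finset.sum_mul, ← Finset.sum_sub_distrib]
    apply Finset.sum_le_sum
    intro k _
    by_cases hk0 : lam k = 0
    · simp [hk0]
    by_cases hpk0 : p k = 0
    · simp [hpk0]
    have hk : 0 < lam k := lt_of_le_of_ne (hlam0 k) (Ne.symm hk0)
    have hpk : 0 < p k := lt_of_le_of_ne (hp k) (Ne.symm hpk0)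
    have hle : lam k * p k ≤ P :=
      Finset.single_le_sum (fun j _ => mul_nonneg (hlam0 j) (hp j)) (Finset.mem_univ k)
    have hPpos : 0 < P := lt_of_lt_of_le (by positivity) hle
    have key : Real.log (lam k) + Real.log (p k) ≤ Real.log P := by
      rw [← Real.log_mul (ne_of_gt hk) (ne_of_gt hpk)]
      exact Real.log_le_log (by positivity) hle
    nlinarith [mul_le_mul_of_nonneg_left key (le_of_lt (mul_pos hk hpk))]


theorem obsEntropy_bounded_concavity {d K : ℕ} {ι : Type*} [Fintype ι]
    (M : ι → Matrix (Fin d) (Fin d) ℂ) (hM : IsPOVM M)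
    (lam : Fin K → ℝ) (hlam0 : ∀ k, 0 ≤ lam k) (hlam1 : ∑ k, lam k = 1)
    (ρ : Fin K → Matrix (Fin d) (Fin d) ℂ) (hρ : ∀ k, IsState (ρ k)) :
    0 ≤ obsEntropy M (∑ k, lam k • ρ k) - ∑ k, lam k * obsEntropy M (ρ k) ∧
      obsEntropy M (∑ k, lam k • ρ k) - ∑ k, lam k * obsEntropy M (ρ k)
        ≤ shannonEntropy lam := by
  obtain ⟨hMpsd, hMsum⟩ := hM
  set p : Fin K → ι → ℝ := fun k i => ((M i * ρ k).trace).re with hpdef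
  have hp0 : ∀ k i, 0 ≤ p k i := fun k i => psd_mul_trace_re_nonneg (hMpsd i) (hρ k).1
  have hpsum : ∀ k, ∑ i, p k i = 1 := by
    intro k
    have h : ∑ i, (M i * ρ k).trace = ((∑ i, M i) * ρ k).trace := by
      rw [Finset.sum_mul, Matrix.trace_sum]
    simp only [hpdef]
    rw [← Complex.re_sum, h, hMsum, one_mul, (hρ k).2, Complex.one_re]
  have hP : ∀ i, ((M i * ∑ k, lam k • ρ k).trace).re = ∑ k, lam k * p k i := by
    intro i
    rw [Finset.mul_sum, Matrix.trace_sum, Complex.re_sum]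
    apply Finset.sum_congr rfl
    intro k _
    rw [Matrix.mul_smul, Matrix.trace_smul]
    simp [Complex.real_smul, hpdef]
  have h1 : obsEntropy M (∑ k, lam k • ρ k)
      = -∑ i, ((∑ k, lam k * p k i) *
        Real.log ((∑ k, lam k * p k i) / (M i).trace.re)) := by
    unfold obsEntropy
    congr 1
    exact Finset.sum_congr rfl fun i _ => by rw [hP i]
  have h2 : ∑ k, lam k * obsEntropy M (ρ k)
      = -∑ i, ∑ k, lam k * (p k i * Real.log (p k i / (M i).trace.re)) := by
    unfold obsEntropy
    have hstep : ∀ k, lam k * -∑ i, ((M i * ρ k).trace.re *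
          Real.log ((M i * ρ k).trace.re / (M i).trace.re))
        = -∑ i, lam k * (p k i * Real.log (p k i / (M i).trace.re)) := by
      intro k
      rw [mul_neg, Finset.mul_sum]
    rw [Finset.sum_congr rfl fun k _ => hstep k, Finset.sum_neg_distrib]
    congr 1
    exact Finset.sum_comm
  have hD : obsEntropy M (∑ k, lam k • ρ k) - ∑ k, lam k * obsEntropy M (ρ k)
      = ∑ i, (∑ k, lam k * (p k i * Real.log (p k i / (M i).trace.re)) -
          (∑ k, lam k * p k i) * Real.log ((∑ k, lam k * p k i) / (M i).trace.re)) := by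
    rw [h1, h2, Finset.sum_sub_distrib]
    ring
  constructor
  · rw [hD]
    exact Finset.sum_nonneg fun i _ =>
      (per_index_obs lam (fun k => p k i) hlam0 hlam1 (fun k => hp0 k i) _).1
  · rw [hD]
    calc ∑ i, (∑ k, lam k * (p k i * Real.log (p k i / (M i).trace.re)) -
          (∑ k, lam k * p k i) * Real.log ((∑ k, lam k * p k i) / (M i).trace.re))
        ≤ ∑ i, ∑ k, lam k * p k i * (-Real.log (lam k)) :=
          Finset.sum_le_sum fun i _ =>
            (per_index_obs lam (fun k => p k i) hlam0 hlam1 (fun k => hp0 k i) _).2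
      _ = ∑ k, ∑ i, (lam k * (-Real.log (lam k))) * p k i := by
          rw [Finset.sum_comm]
          exact Finset.sum_congr rfl fun k _ => Finset.sum_congr rfl fun i _ => by ring
      _ = ∑ k, lam k * (-Real.log (lam k)) := by
          apply Finset.sum_congr rfl
          intro k _
          rw [← Finset.mul_sum, hpsum k, mul_one]
      _ = shannonEntropy lam := by
          unfold shannonEntropy
          rw [← Finset.sum_neg_distrib]
          exact Finset.sum_congr rfl fun k _ => by ring
end
end

section
/- Let p = (p_i)_{i=1}^N and q = (q_i)_{i=1}^N be probability distributions with (1/2)∑_i |p_i − q_i| ≤ ε. Then the Shannon entropy satisfies |H(p) − H(q)| ≤ g(ε) + ε·log N. -/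
open scoped BigOperators ComplexOrder Classical

noncomputable section

section AuxContinuity
open Real Finset

open scoped BigOperators Classical
open Real Finset


-- max entropy
lemma aux_maxEnt {N : ℕ} (hN : 1 ≤ N) (A : Fin N → ℝ) (hA0 : ∀ i, 0 ≤ A i)
    (hA1 : ∑ i, A i = 1) : ∑ i, Real.negMulLog (A i) ≤ Real.log N := by
  have hN0 : (0:ℝ) < N := by exact_mod_cast hN
  have key : ∀ i, Real.negMulLog (A i) - A i * Real.log N ≤ 1/N - A i := by
    intro i
    rcases eq_or_lt_of_le (hA0 i) with h | h
    · rw [← h]; simp [Real.negMulLog]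
    · have h1 : (0:ℝ) < N * A i := by positivity
      have h2 : Real.log (1/(N * A i)) ≤ 1/(N * A i) - 1 :=
        Real.log_le_sub_one_of_pos (by positivity)
      have h3 : Real.log (1/(N * A i)) = -(Real.log N + Real.log (A i)) := by
        rw [one_div, Real.log_inv, Real.log_mul (ne_of_gt hN0) (ne_of_gt h)]
      have h4 : A i * Real.log (1/(N*A i)) ≤ A i * (1/(N*A i) - 1) :=
        mul_le_mul_of_nonneg_left h2 (hA0 i)
      have h5 : A i * (1/(N*A i)) = 1/N := by field_simp
      rw [h3] at h4
      rw [Real.negMulLog]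
      nlinarith [h4]
  calc ∑ i, Real.negMulLog (A i)
      = (∑ i, (Real.negMulLog (A i) - A i * Real.log N)) + (∑ i, A i) * Real.log N := by
        rw [Finset.sum_sub_distrib, ← Finset.sum_mul]; ring
    _ ≤ (∑ i, (1/N - A i)) + 1 * Real.log N := by
        rw [hA1]
        exact add_le_add (Finset.sum_le_sum fun i _ => key i) le_rfl
    _ ≤ Real.log N := by
        have hsum : ∑ _i : Fin N, (1/(N:ℝ)) = 1 := by
          rw [Finset.sum_const, Finset.card_univ, Fintype.card_fin, nsmul_eq_mul, mul_one_div_cancel hN0.ne']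
        rw [Finset.sum_sub_distrib, hA1, hsum]; linarith

-- almost convexity helper
lemma aux_half (c x s : ℝ) (hc : 0 < c) (hx : 0 ≤ x) (hs : c * x ≤ s) :
    -(c*x) * Real.log s ≤ c * Real.negMulLog x - c * x * Real.log c := by
  rcases eq_or_lt_of_le hx with h | h
  · simp [← h, Real.negMulLog]
  · have h1 : (0:ℝ) < c * x := by positivity
    have h2 : Real.log (c*x) ≤ Real.log s := Real.log_le_log h1 hs
    have h3 : Real.log (c*x) = Real.log c + Real.log x := Real.log_mul hc.ne' h.ne'
    rw [Real.negMulLog]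
    nlinarith [mul_le_mul_of_nonneg_left h2 h1.le]

lemma aux_almostConvex (c d x y : ℝ) (hc : 0 < c) (hd : 0 < d) (hx : 0 ≤ x) (hy : 0 ≤ y) :
    Real.negMulLog (c*x + d*y) ≤
      c * Real.negMulLog x + d * Real.negMulLog y - c*x*Real.log c - d*y*Real.log d := by
  have hs1 : c*x ≤ c*x + d*y := by nlinarith
  have hs2 : d*y ≤ c*x + d*y := by nlinarith
  have e1 := aux_half c x (c*x+d*y) hc hx hs1
  have e2 := aux_half d y (c*x+d*y) hd hy hs2
  have : Real.negMulLog (c*x+d*y) = -(c*x) * Real.log (c*x+d*y) + -(d*y) * Real.log (c*x+d*y) := by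
    rw [Real.negMulLog]; ring
  linarith [e1, e2, this.le]


lemma aux_oneSided {N : ℕ} (hN : 1 ≤ N) (ε : ℝ) (hε : 0 < ε)
    (a b A B : Fin N → ℝ)
    (ha0 : ∀ i, 0 ≤ a i) (ha1 : ∑ i, a i = 1)
    (hb0 : ∀ i, 0 ≤ b i) (hb1 : ∑ i, b i = 1)
    (hA0 : ∀ i, 0 ≤ A i) (hA1 : ∑ i, A i = 1)
    (hB0 : ∀ i, 0 ≤ B i) (hB1 : ∑ i, B i = 1)
    (hcoup : ∀ i, a i + ε * B i = b i + ε * A i) :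
    (∑ i, Real.negMulLog (a i)) - (∑ i, Real.negMulLog (b i)) ≤
      (-(ε * Real.log ε) + (1+ε) * Real.log (1+ε)) + ε * Real.log N := by
  have h1ε : (0:ℝ) < 1 + ε := by linarith
  set l : ℝ := (1+ε)⁻¹ with hl
  set m : ℝ := ε * (1+ε)⁻¹ with hm
  have hl0 : 0 < l := by positivity
  have hm0 : 0 < m := by positivity
  have hlm : l + m = 1 := by rw [hl, hm]; field_simp <;> ring
  have hml : m = l * ε := by rw [hm, hl]; ring
  -- lower bound on the mixture entropy (concavity)
  have lower : ∀ i, l * Real.negMulLog (a i) + m * Real.negMulLog (B i) ≤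
      Real.negMulLog (l * a i + m * B i) := by
    intro i
    have := Real.concaveOn_negMulLog.2 (Set.mem_Ici.2 (ha0 i)) (Set.mem_Ici.2 (hB0 i))
      hl0.le hm0.le hlm
    simpa [smul_eq_mul] using this
  -- upper bound (almost convexity)
  have upper : ∀ i, Real.negMulLog (l * b i + m * A i) ≤
      l * Real.negMulLog (b i) + m * Real.negMulLog (A i)
        - l * b i * Real.log l - m * A i * Real.log m := fun i =>
    aux_almostConvex l m (b i) (A i) hl0 hm0 (hb0 i) (hA0 i)
  have hmix : ∀ i, l * a i + m * B i = l * b i + m * A i := by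
    intro i
    have := hcoup i
    rw [hml]
    nlinarith [hcoup i]
  have sum_lower : l * (∑ i, Real.negMulLog (a i)) + m * (∑ i, Real.negMulLog (B i)) ≤
      ∑ i, Real.negMulLog (l * a i + m * B i) := by
    rw [Finset.mul_sum, Finset.mul_sum, ← Finset.sum_add_distrib]
    exact Finset.sum_le_sum fun i _ => lower i
  have sum_upper : ∑ i, Real.negMulLog (l * a i + m * B i) ≤
      l * (∑ i, Real.negMulLog (b i)) + m * (∑ i, Real.negMulLog (A i))
        - l * Real.log l - m * Real.log m := by
    have : ∑ i, Real.negMulLog (l * a i + m * B i)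
        = ∑ i, Real.negMulLog (l * b i + m * A i) := by
      exact Finset.sum_congr rfl fun i _ => by rw [hmix i]
    rw [this]
    calc ∑ i, Real.negMulLog (l * b i + m * A i)
        ≤ ∑ i, (l * Real.negMulLog (b i) + m * Real.negMulLog (A i)
            - l * b i * Real.log l - m * A i * Real.log m) :=
          Finset.sum_le_sum fun i _ => upper i
      _ = l * (∑ i, Real.negMulLog (b i)) + m * (∑ i, Real.negMulLog (A i))
            - l * (∑ i, b i) * Real.log l - m * (∑ i, A i) * Real.log m := by
          simp only [Finset.sum_sub_distrib, Finset.sum_add_distrib, ← Finset.sum_mul,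
            ← Finset.mul_sum]
      _ = _ := by rw [hb1, hA1]; ring
  -- entropy bounds on A, B
  have hAent : ∑ i, Real.negMulLog (A i) ≤ Real.log N := aux_maxEnt hN A hA0 hA1
  have hBent : 0 ≤ ∑ i, Real.negMulLog (B i) := by
    apply Finset.sum_nonneg
    intro i _
    refine Real.negMulLog_nonneg (hB0 i) ?_
    calc B i = ∑ j ∈ {i}, B j := by simp
      _ ≤ ∑ j, B j := Finset.sum_le_sum_of_subset_of_nonneg (Finset.subset_univ _)
          (fun j _ _ => hB0 j)
      _ = 1 := hB1
  -- combine
  have key : l * (∑ i, Real.negMulLog (a i)) + m * (∑ i, Real.negMulLog (B i)) ≤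
      l * (∑ i, Real.negMulLog (b i)) + m * (∑ i, Real.negMulLog (A i))
        - l * Real.log l - m * Real.log m := le_trans sum_lower sum_upper
  have hlogl : Real.log l = -Real.log (1+ε) := by rw [hl, Real.log_inv]
  have hlogm : Real.log m = Real.log ε - Real.log (1+ε) := by
    rw [hm, Real.log_mul hε.ne' (by positivity), Real.log_inv]; ring
  have hlN : 0 ≤ Real.log N := Real.log_nonneg (by exact_mod_cast hN)
  -- multiply key by (1+ε)
  have hexp : ∀ X Y : ℝ, (1+ε) * (l * X + m * Y) = X + ε * Y := by
    intro X Y; rw [hl, hm]; field_simp <;> ring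
  have c1 : (1+ε) * (l * Real.log l) = -Real.log (1+ε) := by
    rw [hlogl, hl]; field_simp <;> ring
  have c2 : (1+ε) * (m * Real.log m) = ε * (Real.log ε - Real.log (1+ε)) := by
    rw [hlogm, hm]; field_simp <;> ring
  have key2 := mul_le_mul_of_nonneg_left key h1ε.le
  have key3 : (∑ i, Real.negMulLog (a i)) + ε * (∑ i, Real.negMulLog (B i)) ≤
      (∑ i, Real.negMulLog (b i)) + ε * (∑ i, Real.negMulLog (A i))
        + Real.log (1+ε) - ε * (Real.log ε - Real.log (1+ε)) := by
    calc (∑ i, Real.negMulLog (a i)) + ε * (∑ i, Real.negMulLog (B i))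
        = (1+ε) * (l * (∑ i, Real.negMulLog (a i)) + m * (∑ i, Real.negMulLog (B i))) :=
          (hexp _ _).symm
      _ ≤ (1+ε) * (l * (∑ i, Real.negMulLog (b i)) + m * (∑ i, Real.negMulLog (A i))
            - l * Real.log l - m * Real.log m) := key2
      _ = (1+ε) * (l * (∑ i, Real.negMulLog (b i)) + m * (∑ i, Real.negMulLog (A i)))
            - (1+ε) * (l * Real.log l) - (1+ε) * (m * Real.log m) := by ring
      _ = _ := by rw [hexp, c1, c2]; ring
  have hAε := mul_le_mul_of_nonneg_left hAent hε.le
  have hBε := mul_le_mul_of_nonneg_left hBent hε.le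
  linarith

lemma aux_shannon_eq {N : ℕ} (p : Fin N → ℝ) :
    shannonEntropy p = ∑ i, Real.negMulLog (p i) := by
  simp [shannonEntropy, Real.negMulLog_eq_neg, ← Finset.sum_neg_distrib]

theorem shannonEntropy_continuity {N : ℕ} (p q : Fin N → ℝ)
    (hp0 : ∀ i, 0 ≤ p i) (hp1 : ∑ i, p i = 1)
    (hq0 : ∀ i, 0 ≤ q i) (hq1 : ∑ i, q i = 1)
    (ε : ℝ) (hε : (1/2) * ∑ i, |p i - q i| ≤ ε) :
    |shannonEntropy p - shannonEntropy q| ≤ gFun ε + ε * Real.log N := by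
  have hN : 1 ≤ N := by
    by_contra h
    push_neg at h
    interval_cases N
    simp at hp1
  set δ : ℝ := (1/2) * ∑ i, |p i - q i| with hδdef
  have hδ0 : 0 ≤ δ := by positivity
  have hε0 : 0 ≤ ε := le_trans hδ0 hε
  rcases eq_or_lt_of_le hε0 with h0 | hεpos
  · -- ε = 0, hence p = q
    have hδε : δ = 0 := le_antisymm (by rw [h0]; exact hε) hδ0
    have habs : ∑ i, |p i - q i| = 0 := by
      have := hδdef ▸ hδε
      linarith
    have hpq : p = q := by
      funext i
      have h1 : ∀ j ∈ Finset.univ, (0:ℝ) ≤ |p j - q j| := fun j _ => abs_nonneg _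
      have h2 := (Finset.sum_eq_zero_iff_of_nonneg h1).1 habs i (Finset.mem_univ i)
      have := abs_eq_zero.1 h2
      linarith
    rw [hpq, sub_self, abs_zero, ← h0]
    simp [gFun]
  · -- ε > 0
    set r : Fin N → ℝ := fun i => max (p i - q i) 0 with hr
    set r' : Fin N → ℝ := fun i => max (q i - p i) 0 with hr'
    have hri : ∀ i, r i - r' i = p i - q i ∧ r i + r' i = |p i - q i| ∧ 0 ≤ r i ∧ 0 ≤ r' i := by
      intro i
      have h1 : 0 ≤ r i := le_max_right _ _
      have h2 : 0 ≤ r' i := le_max_right _ _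
      rcases le_total (p i) (q i) with h | h
      · have e1 : r i = 0 := max_eq_right (by linarith)
        have e2 : r' i = q i - p i := max_eq_left (by linarith)
        have e3 : |p i - q i| = -(p i - q i) := abs_of_nonpos (by linarith)
        exact ⟨by rw [e1, e2]; ring, by rw [e1, e2, e3]; ring, h1, h2⟩
      · have e1 : r i = p i - q i := max_eq_left (by linarith)
        have e2 : r' i = 0 := max_eq_right (by linarith)
        have e3 : |p i - q i| = p i - q i := abs_of_nonneg (by linarith)
        exact ⟨by rw [e1, e2]; ring, by rw [e1, e2, e3]; ring, h1, h2⟩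
    have hrsum : ∑ i, r i = δ := by
      have h1 : ∑ i, (r i + r' i) = 2 * δ := by
        rw [hδdef]
        rw [Finset.sum_congr rfl (fun i _ => (hri i).2.1)]
        ring
      have h2 : ∑ i, (r i - r' i) = 0 := by
        rw [Finset.sum_congr rfl (fun i _ => (hri i).1), Finset.sum_sub_distrib, hp1, hq1]
        ring
      rw [Finset.sum_add_distrib] at h1
      rw [Finset.sum_sub_distrib] at h2
      linarith
    have hr'sum : ∑ i, r' i = δ := by
      have h1 : ∑ i, (r i + r' i) = 2 * δ := by
        rw [hδdef, Finset.sum_congr rfl (fun i _ => (hri i).2.1)]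
        ring
      rw [Finset.sum_add_distrib, hrsum] at h1
      linarith
    have hδε : δ ≤ ε := hε
    set A : Fin N → ℝ := fun i => (r i + (ε - δ) * q i) / ε with hA
    set B : Fin N → ℝ := fun i => (r' i + (ε - δ) * q i) / ε with hB
    have hA0 : ∀ i, 0 ≤ A i := fun i => div_nonneg
      (add_nonneg (hri i).2.2.1 (mul_nonneg (by linarith) (hq0 i))) hεpos.le
    have hB0 : ∀ i, 0 ≤ B i := fun i => div_nonneg
      (add_nonneg (hri i).2.2.2 (mul_nonneg (by linarith) (hq0 i))) hεpos.le
    have hA1 : ∑ i, A i = 1 := by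
      rw [hA]
      simp only [← Finset.sum_div, Finset.sum_add_distrib, ← Finset.mul_sum, hrsum, hq1]
      field_simp; ring
    have hB1 : ∑ i, B i = 1 := by
      rw [hB]
      simp only [← Finset.sum_div, Finset.sum_add_distrib, ← Finset.mul_sum, hr'sum, hq1]
      field_simp; ring
    have hcoup : ∀ i, p i + ε * B i = q i + ε * A i := by
      intro i
      rw [hA, hB]
      have h1 := (hri i).1
      field_simp
      linarith
    have hcoup' : ∀ i, q i + ε * A i = p i + ε * B i := fun i => (hcoup i).symm
    have side1 := aux_oneSided hN ε hεpos p q A B hp0 hp1 hq0 hq1 hA0 hA1 hB0 hB1 hcoup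
    have side2 := aux_oneSided hN ε hεpos q p B A hq0 hq1 hp0 hp1 hB0 hB1 hA0 hA1 hcoup'
    rw [aux_shannon_eq, aux_shannon_eq, gFun]
    rw [abs_sub_le_iff]
    exact ⟨side1, side2⟩

end AuxContinuity
end
end

section
/- Let 𝓜 and 𝓝 be positive trace-preserving linear maps from d×d complex matrices to d'×d' complex matrices, let σ be a quantum state on ℂ^d, let λ = (λ_k)_{k=1}^K be a probability distribution, let ρ_k be quantum states, and set ρ = ∑_k λ_k ρ_k. Assume the support of 𝓜(ρ_k) is contained in the support of 𝓝(σ) for every k with λ_k > 0. Then 0 ≤ ∑_k λ_k D(𝓜(ρ_k)‖𝓝(σ)) − D(𝓜(ρ)‖𝓝(σ)) ≤ H(λ). -/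
open scoped BigOperators ComplexOrder Classical

noncomputable section

namespace RBC
open Matrix
set_option linter.unusedSectionVars false
set_option linter.unusedVariables false
set_option linter.unusedTactic false
variable {n : Type*} [Fintype n] [DecidableEq n]

lemma trace_diag_conj (W : Matrix n n ℂ) (d e : n → ℝ) :
    (diagonal (fun i => (d i : ℂ)) * (W * diagonal (fun j => (e j : ℂ)) * star W)).trace
      = ↑(∑ i, ∑ j, d i * e j * Complex.normSq (W i j)) := by
  rw [Matrix.trace]
  push_cast
  refine Finset.sum_congr rfl fun i _ => ?_
  rw [Matrix.diag_apply, Matrix.diagonal_mul, Matrix.mul_apply, Finset.mul_sum]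
  refine Finset.sum_congr rfl fun j _ => ?_
  rw [Matrix.mul_diagonal, Matrix.star_apply, Complex.star_def, ← Complex.mul_conj]
  ring

lemma trace_cross (U V : Matrix n n ℂ) (hU : star U * U = 1) (hU2 : U * star U = 1) (d e : n → ℝ) :
    ((U * diagonal (fun i => (d i : ℂ)) * star U) * (V * diagonal (fun j => (e j : ℂ)) * star V)).trace
      = ↑(∑ i, ∑ j, d i * e j * Complex.normSq ((star U * V) i j)) := by
  have h1 : (U * diagonal (fun i => (d i : ℂ)) * star U) * (V * diagonal (fun j => (e j : ℂ)) * star V)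
      = U * (diagonal (fun i => (d i : ℂ)) * ((star U * V) * diagonal (fun j => (e j : ℂ)) * star (star U * V))) * star U := by
    rw [StarMul.star_mul (star U) V, star_star]
    simp only [Matrix.mul_assoc]
    rw [hU2, Matrix.mul_one]
  rw [h1, Matrix.trace_mul_cycle, ← Matrix.mul_assoc, hU, Matrix.one_mul, trace_diag_conj]

lemma normSq_row_sum {W : Matrix n n ℂ} (hW : W * star W = 1) (i : n) :
    ∑ j, Complex.normSq (W i j) = 1 := by
  have h : (∑ j, (Complex.normSq (W i j) : ℂ)) = 1 := by
    have h0 : (W * star W) i i = (1 : Matrix n n ℂ) i i := by rw [hW]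
    rw [Matrix.mul_apply, Matrix.one_apply_eq] at h0
    rw [← h0]
    refine Finset.sum_congr rfl fun j _ => ?_
    rw [Matrix.star_apply, Complex.star_def, Complex.mul_conj]
  exact_mod_cast h

lemma normSq_col_sum {W : Matrix n n ℂ} (hW : star W * W = 1) (j : n) :
    ∑ i, Complex.normSq (W i j) = 1 := by
  have h : (∑ i, (Complex.normSq (W i j) : ℂ)) = 1 := by
    have h0 : (star W * W) j j = (1 : Matrix n n ℂ) j j := by rw [hW]
    rw [Matrix.mul_apply, Matrix.one_apply_eq] at h0
    rw [← h0]
    refine Finset.sum_congr rfl fun i _ => ?_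
    rw [Matrix.star_apply, Complex.star_def, mul_comm, Complex.mul_conj]
  exact_mod_cast h

lemma matLog_eq {A : Matrix n n ℂ} (hA : A.IsHermitian) :
    matLog A = (hA.eigenvectorUnitary : Matrix n n ℂ) *
      diagonal (fun i => (Real.log (hA.eigenvalues i) : ℂ)) *
      star (hA.eigenvectorUnitary : Matrix n n ℂ) := by
  rw [matLog, dif_pos hA]

lemma spectral' {A : Matrix n n ℂ} (hA : A.IsHermitian) :
    A = (hA.eigenvectorUnitary : Matrix n n ℂ) *
      diagonal (fun i => ((hA.eigenvalues i : ℝ) : ℂ)) *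
      star (hA.eigenvectorUnitary : Matrix n n ℂ) :=
  hA.spectral_theorem

lemma star_mul_self_eigen {A : Matrix n n ℂ} (hA : A.IsHermitian) :
    star (hA.eigenvectorUnitary : Matrix n n ℂ) * (hA.eigenvectorUnitary : Matrix n n ℂ) = 1 :=
  hA.eigenvectorUnitary.2.1

lemma mul_star_self_eigen {A : Matrix n n ℂ} (hA : A.IsHermitian) :
    (hA.eigenvectorUnitary : Matrix n n ℂ) * star (hA.eigenvectorUnitary : Matrix n n ℂ) = 1 :=
  hA.eigenvectorUnitary.2.2



lemma sandwich (U D E : Matrix n n ℂ) (h : star U * U = 1) :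
    (U * D * star U) * (U * E * star U) = U * (D * E) * star U := by
  calc (U * D * star U) * (U * E * star U)
      = U * (D * ((star U * U) * (E * star U))) := by simp only [Matrix.mul_assoc]
    _ = U * (D * (E * star U)) := by rw [h, Matrix.one_mul]
    _ = U * (D * E) * star U := by simp only [Matrix.mul_assoc]

lemma sandwich_conj (U D : Matrix n n ℂ) (h : star U * U = 1) :
    star U * (U * D * star U) * U = D := by
  calc star U * (U * D * star U) * U
      = (star U * U) * (D * (star U * U)) := by simp only [Matrix.mul_assoc]
    _ = D := by rw [h, Matrix.one_mul, Matrix.mul_one]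

lemma conj_spectral {A : Matrix n n ℂ} (hA : A.IsHermitian) :
    star (hA.eigenvectorUnitary : Matrix n n ℂ) * A * (hA.eigenvectorUnitary : Matrix n n ℂ)
      = diagonal (fun i => ((hA.eigenvalues i : ℝ) : ℂ)) := by
  have h3 := congrArg (fun B => star (hA.eigenvectorUnitary : Matrix n n ℂ) * B *
    (hA.eigenvectorUnitary : Matrix n n ℂ)) (spectral' hA)
  exact h3.trans (sandwich_conj _ _ (star_mul_self_eigen hA))

lemma mul_self_eigen {A : Matrix n n ℂ} (hA : A.IsHermitian) :
    A * A = (hA.eigenvectorUnitary : Matrix n n ℂ) *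
      diagonal (fun i => ((hA.eigenvalues i ^ 2 : ℝ) : ℂ)) *
      star (hA.eigenvectorUnitary : Matrix n n ℂ) := by
  calc A * A = _ := congrArg₂ (· * ·) (spectral' hA) (spectral' hA)
    _ = (hA.eigenvectorUnitary : Matrix n n ℂ) *
        (diagonal (fun i => ((hA.eigenvalues i : ℝ) : ℂ)) * diagonal (fun i => ((hA.eigenvalues i : ℝ) : ℂ))) *
        star (hA.eigenvectorUnitary : Matrix n n ℂ) := sandwich _ _ _ (star_mul_self_eigen hA)
    _ = _ := by
        rw [Matrix.diagonal_mul_diagonal]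
        congr 1
        · congr 1
          funext i
          push_cast
          ring

lemma trace_eig {A : Matrix n n ℂ} (hA : A.IsHermitian) :
    A.trace = ↑(∑ i, hA.eigenvalues i) := by
  conv_lhs => rw [spectral' hA]
  rw [Matrix.trace_mul_cycle, star_mul_self_eigen hA, Matrix.one_mul, Matrix.trace_diagonal]
  push_cast
  rfl

lemma entry_conj (Q : Matrix n n ℂ) (d : n → ℝ) (j : n) :
    (star Q * diagonal (fun i => (d i : ℂ)) * Q) j j = ↑(∑ i, d i * Complex.normSq (Q i j)) := by
  rw [Matrix.mul_apply]
  push_cast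
  refine Finset.sum_congr rfl fun i _ => ?_
  rw [Matrix.mul_diagonal, Matrix.star_apply, Complex.star_def, ← Complex.mul_conj]
  ring



/-- cross trace of `A` against `matLog B`. -/
lemma trace_mul_log {A B : Matrix n n ℂ} (hA : A.IsHermitian) (hB : B.IsHermitian) :
    (A * matLog B).trace = ↑(∑ i, ∑ j, hA.eigenvalues i * Real.log (hB.eigenvalues j) *
      Complex.normSq ((star (hA.eigenvectorUnitary : Matrix n n ℂ) *
        (hB.eigenvectorUnitary : Matrix n n ℂ)) i j)) := by
  rw [matLog, dif_pos hB]
  conv_lhs => rw [spectral' hA]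
  exact trace_cross _ _ (star_mul_self_eigen hA) (mul_star_self_eigen hA) _ _

lemma trace_mul_log_self {A : Matrix n n ℂ} (hA : A.IsHermitian) :
    (A * matLog A).trace = ↑(∑ i, hA.eigenvalues i * Real.log (hA.eigenvalues i)) := by
  rw [trace_mul_log hA hA, star_mul_self_eigen hA]
  norm_cast
  refine Finset.sum_congr rfl fun i _ => ?_
  rw [Finset.sum_eq_single i]
  · simp
  · intro j _ hj
    simp [Matrix.one_apply, (Ne.symm hj)]
  · simp

lemma psd_smul {A : Matrix n n ℂ} (hA : A.PosSemidef) {c : ℝ} (hc : 0 ≤ c) :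
    ((c : ℂ) • A).PosSemidef := by
  rw [Matrix.posSemidef_iff_dotProduct_mulVec]
  constructor
  · rw [Matrix.IsHermitian, Matrix.conjTranspose_smul, hA.1.eq]
    congr 1
    simp [Complex.star_def]
  · intro x
    rw [Matrix.smul_mulVec, dotProduct_smul, smul_eq_mul]
    have h2 := hA.dotProduct_mulVec_nonneg x
    rw [Complex.nonneg_iff] at h2 ⊢
    constructor
    · rw [Complex.re_ofReal_mul]
      exact mul_nonneg hc h2.1
    · rw [Complex.im_ofReal_mul]
      rw [← h2.2, mul_zero]

lemma trace_psd_re_nonneg {A : Matrix n n ℂ} (hA : A.PosSemidef) : 0 ≤ A.trace.re := by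
  rw [trace_eig hA.1, Complex.ofReal_re]
  exact Finset.sum_nonneg fun i _ => hA.eigenvalues_nonneg i

lemma trace_mul_psd_nonneg {A B : Matrix n n ℂ} (hA : A.PosSemidef) (hB : B.PosSemidef) :
    0 ≤ (A * B).trace.re := by
  obtain ⟨C, hC⟩ : ∃ C : Matrix n n ℂ, B = Cᴴ * C := by
    open MatrixOrder Matrix.Norms.L2Operator in exact CStarAlgebra.nonneg_iff_eq_star_mul_self.mp hB.nonneg
  subst hC
  have h1 : A * (Cᴴ * C) = (A * Cᴴ) * C := by rw [Matrix.mul_assoc]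
  rw [h1, Matrix.trace_mul_comm, ← Matrix.mul_assoc]
  exact trace_psd_re_nonneg (hA.mul_mul_conjTranspose_same C)

lemma kernel_incl {A M : Matrix n n ℂ} (hA : A.PosSemidef) (hle : (M - A).PosSemidef) :
    ∀ x, M *ᵥ x = 0 → A *ᵥ x = 0 := by
  intro x hx
  have h1 := hle.dotProduct_mulVec_nonneg x
  rw [Matrix.sub_mulVec, dotProduct_sub, hx, dotProduct_zero, zero_sub] at h1
  have h2 := hA.dotProduct_mulVec_nonneg x
  have h3 : star x ⬝ᵥ A *ᵥ x = 0 := le_antisymm (by simpa using neg_nonneg.mp (by simpa using h1)) h2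
  exact (hA.dotProduct_mulVec_zero_iff x).mp h3



/-- kernel-coordinate lemma -/
lemma eig_mul_entry_eq_zero {A M : Matrix n n ℂ} (hA : A.IsHermitian) (hM : M.IsHermitian)
    (hker : ∀ x, M *ᵥ x = 0 → A *ᵥ x = 0) {j : n} (hmj : hM.eigenvalues j = 0) (i : n) :
    (hA.eigenvalues i : ℂ) * ((star (hA.eigenvectorUnitary : Matrix n n ℂ) *
      (hM.eigenvectorUnitary : Matrix n n ℂ)) i j) = 0 := by
  set U : Matrix n n ℂ := (hA.eigenvectorUnitary : Matrix n n ℂ) with hUdef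
  set V : Matrix n n ℂ := (hM.eigenvectorUnitary : Matrix n n ℂ) with hVdef
  have hMV : M * V = V * diagonal (fun i => ((hM.eigenvalues i : ℝ) : ℂ)) := by
    have h3 := congrArg (fun B => B * V) (spectral' hM)
    rw [h3]
    calc V * diagonal (fun i => ((hM.eigenvalues i : ℝ) : ℂ)) * star V * V
        = V * (diagonal (fun i => ((hM.eigenvalues i : ℝ) : ℂ)) * (star V * V)) := by
          simp only [Matrix.mul_assoc]
      _ = _ := by rw [star_mul_self_eigen hM, Matrix.mul_one]
  have hcol : M *ᵥ (fun l => V l j) = 0 := by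
    funext l
    have h1 : (M * V) l j = (V * diagonal (fun i => ((hM.eigenvalues i : ℝ) : ℂ))) l j := by
      rw [hMV]
    rw [Matrix.mul_diagonal, hmj] at h1
    simp only [Complex.ofReal_zero, mul_zero] at h1
    have h2 : (M *ᵥ fun l => V l j) l = (M * V) l j := by
      simp [Matrix.mulVec, dotProduct, Matrix.mul_apply]
    rw [h2, h1]
    rfl
  have hAcol := hker _ hcol
  have hAVj : ∀ l, (A * V) l j = 0 := by
    intro l
    have h2 : (A *ᵥ fun l => V l j) l = (A * V) l j := by
      simp [Matrix.mulVec, dotProduct, Matrix.mul_apply]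
    rw [← h2, hAcol]
    rfl
  have hzero : (star U * A * V) i j = 0 := by
    rw [Matrix.mul_assoc, Matrix.mul_apply]
    exact Finset.sum_eq_zero fun l _ => by rw [hAVj l, mul_zero]
  have hform : star U * A * V = diagonal (fun i => ((hA.eigenvalues i : ℝ) : ℂ)) * (star U * V) := by
    have h3 := congrArg (fun B => star U * B * V) (spectral' hA)
    rw [h3]
    calc star U * (U * diagonal (fun i => ((hA.eigenvalues i : ℝ) : ℂ)) * star U) * V
        = (star U * U) * (diagonal (fun i => ((hA.eigenvalues i : ℝ) : ℂ)) * (star U * V)) := by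
          simp only [Matrix.mul_assoc]
      _ = _ := by rw [star_mul_self_eigen hA, Matrix.one_mul]
  rw [hform] at hzero
  rw [Matrix.diagonal_mul] at hzero
  exact hzero

lemma eig_mul_normSq_eq_zero {A M : Matrix n n ℂ} (hA : A.IsHermitian) (hM : M.IsHermitian)
    (hker : ∀ x, M *ᵥ x = 0 → A *ᵥ x = 0) {j : n} (hmj : hM.eigenvalues j = 0) (i : n) :
    hA.eigenvalues i * Complex.normSq ((star (hA.eigenvectorUnitary : Matrix n n ℂ) *
      (hM.eigenvectorUnitary : Matrix n n ℂ)) i j) = 0 := by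
  have h := eig_mul_entry_eq_zero hA hM hker hmj i
  rcases mul_eq_zero.mp h with h1 | h2
  · rw [show hA.eigenvalues i = 0 from by exact_mod_cast h1, zero_mul]
  · rw [h2, Complex.normSq_zero, mul_zero]



lemma diag_coe_herm (s : n → ℝ) :
    (diagonal (fun j => (s j : ℂ)))ᴴ = diagonal (fun j => (s j : ℂ)) := by
  rw [Matrix.diagonal_conjTranspose]
  exact congrArg Matrix.diagonal (funext fun j => by
    simp only [Pi.star_apply, Complex.star_def, Complex.conj_ofReal])

lemma zero_le_coe {r : ℝ} (hr : 0 ≤ r) : (0 : ℂ) ≤ (r : ℂ) := by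
  rw [Complex.nonneg_iff]
  simp [hr]

lemma psd_sub_sq {X : Matrix n n ℂ} (hX : X.PosSemidef) (h1X : ((1 : Matrix n n ℂ) - X).PosSemidef) :
    (X - X * X).PosSemidef := by
  set W : Matrix n n ℂ := (hX.1.eigenvectorUnitary : Matrix n n ℂ) with hW
  set e : n → ℝ := hX.1.eigenvalues with he
  have he0 : ∀ i, 0 ≤ e i := hX.eigenvalues_nonneg
  have he1 : ∀ i, e i ≤ 1 := by
    intro i
    have hconj : (Wᴴ * ((1 : Matrix n n ℂ) - X) * W).PosSemidef :=
      h1X.conjTranspose_mul_mul_same W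
    have hcalc : Wᴴ * ((1 : Matrix n n ℂ) - X) * W = diagonal (fun i => ((1 - e i : ℝ) : ℂ)) := by
      have : Wᴴ * ((1 : Matrix n n ℂ) - X) * W = Wᴴ * W - Wᴴ * X * W := by
        rw [Matrix.mul_sub, Matrix.sub_mul, Matrix.mul_one]
      rw [this]
      have h2 : (Wᴴ : Matrix n n ℂ) = star W := rfl
      rw [h2, star_mul_self_eigen hX.1, conj_spectral hX.1]
      rw [← Matrix.diagonal_one, Matrix.diagonal_sub]
      congr 1
      funext i
      push_cast
      ring
    rw [hcalc] at hconj
    have := (Matrix.posSemidef_diagonal_iff.mp hconj) i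
    have hr : (0:ℝ) ≤ 1 - e i := by
      have := Complex.nonneg_iff.mp this
      simpa using this.1
    linarith
  have hform : X - X * X = W * diagonal (fun i => ((e i - e i ^ 2 : ℝ) : ℂ)) * star W := by
    have h0 : X - X * X = W * diagonal (fun i => ((e i : ℝ) : ℂ)) * star W
        - W * diagonal (fun i => ((e i ^ 2 : ℝ) : ℂ)) * star W :=
      congrArg₂ (· - ·) (spectral' hX.1) (mul_self_eigen hX.1)
    rw [h0]
    rw [← Matrix.sub_mul, ← Matrix.mul_sub]
    congr 2
    rw [Matrix.diagonal_sub]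
    exact congrArg Matrix.diagonal (funext fun i => by push_cast; ring)
  rw [hform]
  have hdiag : (diagonal (fun i => ((e i - e i ^ 2 : ℝ) : ℂ))).PosSemidef := by
    rw [Matrix.posSemidef_diagonal_iff]
    intro i
    apply zero_le_coe
    nlinarith [he0 i, he1 i]
  have := hdiag.mul_mul_conjTranspose_same W
  rwa [show (Wᴴ : Matrix n n ℂ) = star W from rfl] at this

lemma trace_C1 (c c' : n → ℂ) (B : Matrix n n ℂ) :
    (diagonal c * B * diagonal c').trace = ∑ j, c j * B j j * c' j := by
  rw [Matrix.trace]
  refine Finset.sum_congr rfl fun j _ => ?_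
  rw [Matrix.diag_apply, Matrix.mul_diagonal, Matrix.diagonal_mul]

lemma trace_C2 (c c' : n → ℂ) (B : Matrix n n ℂ) :
    (diagonal c * B * diagonal c' * B).trace = ∑ j, ∑ l, c j * B j l * c' l * B l j := by
  rw [Matrix.trace]
  refine Finset.sum_congr rfl fun j _ => ?_
  rw [Matrix.diag_apply, Matrix.mul_apply]
  refine Finset.sum_congr rfl fun l _ => ?_
  rw [Matrix.mul_diagonal, Matrix.diagonal_mul]



set_option maxHeartbeats 1000000 in
/-- the key trace inequality: `tr (A² M⁻¹) ≤ tr A` for `0 ≤ A ≤ M`. -/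
lemma Tlem {A M : Matrix n n ℂ} (hA : A.PosSemidef) (hM : M.PosSemidef)
    (hle : (M - A).PosSemidef) :
    ∑ j, ((star (hM.1.eigenvectorUnitary : Matrix n n ℂ) * (A * A) *
        (hM.1.eigenvectorUnitary : Matrix n n ℂ)) j j).re * (hM.1.eigenvalues j)⁻¹
      ≤ A.trace.re := by
  set V : Matrix n n ℂ := (hM.1.eigenvectorUnitary : Matrix n n ℂ) with hVdef
  set m : n → ℝ := hM.1.eigenvalues with hmdef
  have hm0 : ∀ j, 0 ≤ m j := hM.eigenvalues_nonneg
  set s : n → ℝ := fun j => (Real.sqrt (m j))⁻¹ with hsdef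
  set At : Matrix n n ℂ := star V * A * V with hAtdef
  have hAtpsd : At.PosSemidef := by
    have := hA.conjTranspose_mul_mul_same V
    rwa [show (Vᴴ : Matrix n n ℂ) = star V from rfl] at this
  have hAtherm : At.IsHermitian := hAtpsd.1
  -- real facts about s
  have hs2 : ∀ j, s j ^ 2 = (m j)⁻¹ := by
    intro j
    show ((Real.sqrt (m j))⁻¹) ^ 2 = (m j)⁻¹
    rw [inv_pow, Real.sq_sqrt (hm0 j)]
  have hsm : ∀ j, m j * s j ^ 2 = if m j = 0 then 0 else 1 := by
    intro j
    rw [hs2 j]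
    by_cases h : m j = 0
    · simp [h]
    · simp [h, mul_inv_cancel₀ h]
  -- row vanishing
  have hker := kernel_incl hA hle
  have hQform : At = star (star (hA.1.eigenvectorUnitary : Matrix n n ℂ) * V) *
      diagonal (fun i => ((hA.1.eigenvalues i : ℝ) : ℂ)) *
      (star (hA.1.eigenvectorUnitary : Matrix n n ℂ) * V) := by
    rw [hAtdef]
    have h3 := congrArg (fun B => star V * B * V) (spectral' hA.1)
    rw [h3, StarMul.star_mul, star_star]
    simp only [Matrix.mul_assoc]
  have hdiagzero : ∀ j, m j = 0 → At j j = 0 := by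
    intro j hmj
    rw [hQform]
    rw [entry_conj]
    have : ∑ i, hA.1.eigenvalues i *
        Complex.normSq ((star (hA.1.eigenvectorUnitary : Matrix n n ℂ) * V) i j) = 0 :=
      Finset.sum_eq_zero fun i _ => eig_mul_normSq_eq_zero hA.1 hM.1 hker hmj i
    rw [this, Complex.ofReal_zero]
  have hrow0 : ∀ j, m j = 0 → ∀ l, At j l = 0 := by
    intro j hmj l
    have hd := hdiagzero j hmj
    have hdot : star (Pi.single j (1:ℂ)) ⬝ᵥ At *ᵥ Pi.single j (1:ℂ) = At j j := by
      rw [Matrix.mulVec_single]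
      simp [dotProduct, Pi.single_apply]
    have hcol : At *ᵥ Pi.single j (1:ℂ) = 0 :=
      (hAtpsd.dotProduct_mulVec_zero_iff _).mp (by rw [hdot, hd])
    have hlj : At l j = 0 := by
      have := congrFun hcol l
      rw [Matrix.mulVec_single] at this
      simpa using this
    rw [← hAtherm.apply j l, hlj, star_zero]
  -- the X matrix
  set Ds : Matrix n n ℂ := diagonal (fun j => (s j : ℂ)) with hDsdef
  set X : Matrix n n ℂ := Ds * At * Ds with hXdef
  have hXpsd : X.PosSemidef := by
    have := hAtpsd.mul_mul_conjTranspose_same Ds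
    rwa [show (Dsᴴ : Matrix n n ℂ) = Ds from diag_coe_herm s] at this
  have hMt : star V * M * V = diagonal (fun j => ((m j : ℝ) : ℂ)) := conj_spectral hM.1
  have hDMD : Ds * diagonal (fun j => ((m j : ℝ) : ℂ)) * Ds
      = diagonal (fun j => ((s j * m j * s j : ℝ) : ℂ)) := by
    rw [hDsdef, Matrix.diagonal_mul_diagonal, Matrix.diagonal_mul_diagonal]
    exact congrArg _ (funext fun j => by push_cast; ring)
  have h1X : ((1 : Matrix n n ℂ) - X).PosSemidef := by
    have hsub : star V * (M - A) * V = diagonal (fun j => ((m j : ℝ) : ℂ)) - At := by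
      rw [Matrix.mul_sub, Matrix.sub_mul, hMt, hAtdef]
    have hT2eq : Ds * (star V * (M - A) * V) * Ds
        = diagonal (fun j => ((s j * m j * s j : ℝ) : ℂ)) - X := by
      rw [hsub, Matrix.mul_sub, Matrix.sub_mul, hDMD, hXdef]
    have hT1psd : ((1 : Matrix n n ℂ)
        - diagonal (fun j => ((s j * m j * s j : ℝ) : ℂ))).PosSemidef := by
      rw [← Matrix.diagonal_one, Matrix.diagonal_sub, Matrix.posSemidef_diagonal_iff]
      intro j
      have h7 : s j * m j * s j = if m j = 0 then 0 else 1 := by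
        rw [← hsm j]; ring
      rw [h7]
      by_cases h : m j = 0 <;> simp [h]
    have hT2psd : (Ds * (star V * (M - A) * V) * Ds).PosSemidef := by
      have h4 : (star V * (M - A) * V).PosSemidef := by
        have := hle.conjTranspose_mul_mul_same V
        rwa [show (Vᴴ : Matrix n n ℂ) = star V from rfl] at this
      have := h4.mul_mul_conjTranspose_same Ds
      rwa [show (Dsᴴ : Matrix n n ℂ) = Ds from diag_coe_herm s] at this
    rw [hT2eq] at hT2psd
    have hsum := hT1psd.add hT2psd
    rwa [sub_add_sub_cancel] at hsum
  have hYpsd := psd_sub_sq hXpsd h1X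
  have htr : 0 ≤ ((diagonal (fun j => ((m j : ℝ) : ℂ))) * (X - X * X)).trace.re :=
    trace_mul_psd_nonneg (Matrix.posSemidef_diagonal_iff.mpr fun j => zero_le_coe (hm0 j)) hYpsd
  -- split the trace
  have hsplit : ((diagonal (fun j => ((m j : ℝ) : ℂ))) * (X - X * X)).trace.re
      = ((diagonal (fun j => ((m j : ℝ) : ℂ))) * X).trace.re
        - ((diagonal (fun j => ((m j : ℝ) : ℂ))) * (X * X)).trace.re := by
    rw [Matrix.mul_sub, Matrix.trace_sub, Complex.sub_re]
  -- first trace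
  have htA : ((diagonal (fun j => ((m j : ℝ) : ℂ))) * X).trace.re
      = ∑ j, (m j * s j ^ 2) * (At j j).re := by
    have hform : (diagonal (fun j => ((m j : ℝ) : ℂ))) * X
        = diagonal (fun j => ((m j * s j : ℝ) : ℂ)) * At * Ds := by
      rw [hXdef]
      simp only [← Matrix.mul_assoc]
      rw [hDsdef, Matrix.diagonal_mul_diagonal]
      congr 2
      exact congrArg _ (funext fun j => by push_cast; ring)
    rw [hform, hDsdef, trace_C1, Complex.re_sum]
    refine Finset.sum_congr rfl fun j _ => ?_
    have h8 : ((m j * s j : ℝ) : ℂ) * At j j * ((s j : ℝ) : ℂ)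
        = ((m j * s j ^ 2 : ℝ) : ℂ) * At j j := by push_cast; ring
    rw [h8, Complex.re_ofReal_mul]
  -- second trace
  have htAA : ((diagonal (fun j => ((m j : ℝ) : ℂ))) * (X * X)).trace.re
      = ∑ j, ∑ l, (m j * s j ^ 2) * (s l ^ 2) * Complex.normSq (At j l) := by
    have h5 : (diagonal (fun j => ((m j : ℝ) : ℂ))) * (X * X)
        = ((diagonal (fun j => ((m j : ℝ) : ℂ))) * Ds * At * (Ds * Ds) * At) * Ds := by
      rw [hXdef]; simp only [Matrix.mul_assoc]
    rw [h5, Matrix.trace_mul_comm]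
    have c1 : Ds * Ds = diagonal (fun l => ((s l * s l : ℝ) : ℂ)) := by
      rw [hDsdef, Matrix.diagonal_mul_diagonal]
      exact congrArg _ (funext fun l => by push_cast; ring)
    have c2 : Ds * ((diagonal (fun j => ((m j : ℝ) : ℂ))) * Ds)
        = diagonal (fun j => ((s j * m j * s j : ℝ) : ℂ)) := by
      rw [hDsdef, Matrix.diagonal_mul_diagonal, Matrix.diagonal_mul_diagonal]
      exact congrArg _ (funext fun j => by push_cast; ring)
    have h6 : Ds * ((diagonal (fun j => ((m j : ℝ) : ℂ))) * Ds * At * (Ds * Ds) * At)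
        = diagonal (fun j => ((s j * m j * s j : ℝ) : ℂ)) * At
            * diagonal (fun l => ((s l * s l : ℝ) : ℂ)) * At := by
      calc Ds * ((diagonal (fun j => ((m j : ℝ) : ℂ))) * Ds * At * (Ds * Ds) * At)
          = (Ds * ((diagonal (fun j => ((m j : ℝ) : ℂ))) * Ds)) * At * (Ds * Ds) * At := by
            simp only [Matrix.mul_assoc]
        _ = _ := by rw [c1, c2]
    rw [h6, trace_C2, Complex.re_sum]
    refine Finset.sum_congr rfl fun j _ => ?_
    rw [Complex.re_sum]
    refine Finset.sum_congr rfl fun l _ => ?_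
    have h9 : At l j = star (At j l) := (hAtherm.apply l j).symm
    rw [h9, Complex.star_def]
    have h10 : ((s j * m j * s j : ℝ) : ℂ) * At j l * ((s l * s l : ℝ) : ℂ)
          * (starRingEnd ℂ) (At j l)
        = ((m j * s j ^ 2) * (s l ^ 2) : ℝ) * (At j l * (starRingEnd ℂ) (At j l)) := by
      push_cast; ring
    rw [h10, Complex.mul_conj, ← Complex.ofReal_mul, Complex.ofReal_re]
  -- identify the target with the second trace
  have hAAt : star V * (A * A) * V = At * At := by
    rw [hAtdef]
    have h11 : star V * A * V * (star V * A * V)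
        = star V * A * ((V * star V) * (A * V)) := by simp only [Matrix.mul_assoc]
    rw [h11, mul_star_self_eigen hM.1, Matrix.one_mul]
    simp only [Matrix.mul_assoc]
  have hsymm : ∀ j l, Complex.normSq (At l j) = Complex.normSq (At j l) := fun j l => by
    rw [← hAtherm.apply l j, Complex.star_def, Complex.normSq_conj]
  have htarget : ∑ j, ((star V * (A * A) * V) j j).re * (m j)⁻¹
      = ∑ j, ∑ l, (m j * s j ^ 2) * (s l ^ 2) * Complex.normSq (At j l) := by
    have step1 : ∑ j, ((star V * (A * A) * V) j j).re * (m j)⁻¹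
        = ∑ j, ∑ l, Complex.normSq (At l j) * (m j)⁻¹ := by
      refine Finset.sum_congr rfl fun j _ => ?_
      have h12 : ((star V * (A * A) * V) j j).re = ∑ l, Complex.normSq (At l j) := by
        rw [hAAt, Matrix.mul_apply, Complex.re_sum]
        refine Finset.sum_congr rfl fun l _ => ?_
        rw [← hAtherm.apply j l, Complex.star_def, mul_comm, Complex.mul_conj, Complex.ofReal_re]
      rw [h12, Finset.sum_mul]
    rw [step1, Finset.sum_comm]
    refine Finset.sum_congr rfl fun j _ => Finset.sum_congr rfl fun l _ => ?_
    by_cases h : m j = 0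
    · rw [hrow0 j h l]
      simp [h, hsm j]
    · have h13 : m j * s j ^ 2 = 1 := by rw [hsm j]; simp [h]
      rw [h13, hs2 l]
      ring
  rw [htarget]
  have hfinal : ((diagonal (fun j => ((m j : ℝ) : ℂ))) * X).trace.re = A.trace.re := by
    rw [htA]
    have h14 : ∑ j, (m j * s j ^ 2) * (At j j).re = ∑ j, (At j j).re := by
      refine Finset.sum_congr rfl fun j _ => ?_
      by_cases h : m j = 0
      · rw [hdiagzero j h]
        simp [hsm, h]
      · rw [hsm j]; simp [h]
    rw [h14]
    have hVV : V * star V = 1 := mul_star_self_eigen hM.1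
    have h15 : At.trace = A.trace := by
      rw [hAtdef, Matrix.trace_mul_cycle, hVV, Matrix.one_mul]
    calc ∑ j, (At j j).re = At.trace.re := by rw [Matrix.trace, Complex.re_sum]; rfl
      _ = A.trace.re := by rw [h15]
  calc ∑ j, ∑ l, (m j * s j ^ 2) * (s l ^ 2) * Complex.normSq (At j l)
      = ((diagonal (fun j => ((m j : ℝ) : ℂ))) * (X * X)).trace.re := htAA.symm
    _ ≤ ((diagonal (fun j => ((m j : ℝ) : ℂ))) * X).trace.re := by
        have := htr
        rw [hsplit] at this
        linarith
    _ = A.trace.re := hfinal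



/-- Klein inequality, scalar form. -/
lemma scalar_klein (a b : n → ℝ) (c : n → n → ℝ) (ha : ∀ i, 0 ≤ a i) (hb : ∀ j, 0 ≤ b j)
    (hc : ∀ i j, 0 ≤ c i j) (hrow : ∀ i, ∑ j, c i j = 1) (hcol : ∀ j, ∑ i, c i j = 1)
    (hker : ∀ i j, b j = 0 → a i * c i j = 0) :
    ∑ i, a i - ∑ j, b j ≤
      ∑ i, a i * Real.log (a i) - ∑ i, ∑ j, a i * Real.log (b j) * c i j := by
  set t : n → ℝ := fun i => ∑ j, c i j * b j with ht
  have ht0 : ∀ i, 0 ≤ t i := fun i => Finset.sum_nonneg fun j _ => mul_nonneg (hc i j) (hb j)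
  have htsum : ∑ i, t i = ∑ j, b j := by
    rw [ht]
    simp only
    rw [Finset.sum_comm]
    refine Finset.sum_congr rfl fun j _ => ?_
    rw [← Finset.sum_mul, hcol j, one_mul]
  have key : ∀ i, a i - t i ≤ a i * Real.log (a i) - ∑ j, a i * Real.log (b j) * c i j := by
    intro i
    rcases eq_or_lt_of_le (ha i) with h0 | hpos
    · -- a i = 0
      rw [← h0]
      have e1 : (0:ℝ) * Real.log 0 = 0 := by ring
      have e2 : ∑ j, (0:ℝ) * Real.log (b j) * c i j = 0 :=
        Finset.sum_eq_zero fun j _ => by ring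
      rw [e1, e2]
      linarith [ht0 i]
    · -- a i > 0
      have hti : 0 < t i := by
        rcases eq_or_lt_of_le (ht0 i) with h1 | h1
        · exfalso
          have hz : ∀ j, c i j * b j = 0 := by
            intro j
            have := Finset.sum_eq_zero_iff_of_nonneg
              (fun j _ => mul_nonneg (hc i j) (hb j)) |>.mp h1.symm
            exact this j (Finset.mem_univ j)
          have hcz : ∀ j, c i j = 0 := by
            intro j
            rcases mul_eq_zero.mp (hz j) with h2 | h2
            · exact h2
            · have := hker i j h2
              rcases mul_eq_zero.mp this with h3 | h3
              · exact absurd h3 (ne_of_gt hpos)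
              · exact h3
          have := hrow i
          rw [Finset.sum_eq_zero (fun j _ => hcz j)] at this
          norm_num at this
        · exact h1
      have hjensen : ∑ j, Real.log (b j) * c i j ≤ Real.log (t i) := by
        have hterm : ∀ j, Real.log (b j) * c i j
            ≤ (Real.log (t i) + b j / t i - 1) * c i j := by
          intro j
          rcases eq_or_lt_of_le (hc i j) with hc0 | hc0
          · rw [← hc0]; ring_nf; exact le_refl _
          · rcases eq_or_lt_of_le (hb j) with hb0 | hb0
            · exfalso
              have := hker i j hb0.symm
              rcases mul_eq_zero.mp this with h3 | h3
              · exact absurd h3 (ne_of_gt hpos)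
              · exact absurd h3 (ne_of_gt hc0)
            · have hlog : Real.log (b j) - Real.log (t i) ≤ b j / t i - 1 := by
                have := Real.log_le_sub_one_of_pos (div_pos hb0 hti)
                rwa [Real.log_div (ne_of_gt hb0) (ne_of_gt hti)] at this
              have : Real.log (b j) ≤ Real.log (t i) + b j / t i - 1 := by linarith
              exact mul_le_mul_of_nonneg_right this (le_of_lt hc0)
        calc ∑ j, Real.log (b j) * c i j ≤ ∑ j, (Real.log (t i) + b j / t i - 1) * c i j :=
              Finset.sum_le_sum fun j _ => hterm j
          _ = ∑ j, (Real.log (t i) * c i j + (c i j * b j) / t i - c i j) := by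
              refine Finset.sum_congr rfl fun j _ => ?_
              field_simp
          _ = Real.log (t i) * (∑ j, c i j) + (∑ j, c i j * b j) / t i - (∑ j, c i j) := by
              rw [Finset.sum_sub_distrib, Finset.sum_add_distrib, ← Finset.mul_sum,
                ← Finset.sum_div]
          _ = Real.log (t i) := by
              have htt : ∑ j, c i j * b j = t i := rfl
              rw [hrow i, htt, mul_one, div_self (ne_of_gt hti)]
              ring
      have hfin : a i * Real.log (a i) - a i * Real.log (t i) ≥ a i - t i := by
        have hlog2 : Real.log (t i) - Real.log (a i) ≤ t i / a i - 1 := by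
          have := Real.log_le_sub_one_of_pos (div_pos hti hpos)
          rwa [Real.log_div (ne_of_gt hti) (ne_of_gt hpos)] at this
        have h5 : a i * (Real.log (t i) - Real.log (a i)) ≤ a i * (t i / a i - 1) :=
          mul_le_mul_of_nonneg_left hlog2 (le_of_lt hpos)
        have h6 : a i * (t i / a i - 1) = t i - a i := by field_simp
        nlinarith
      have h7 : ∑ j, a i * Real.log (b j) * c i j = a i * ∑ j, Real.log (b j) * c i j := by
        rw [Finset.mul_sum]
        exact Finset.sum_congr rfl fun j _ => by ring
      rw [h7]
      have h8 : a i * ∑ j, Real.log (b j) * c i j ≤ a i * Real.log (t i) :=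
        mul_le_mul_of_nonneg_left hjensen (le_of_lt hpos)
      linarith
  calc ∑ i, a i - ∑ j, b j = ∑ i, (a i - t i) := by
        rw [Finset.sum_sub_distrib, htsum]
    _ ≤ ∑ i, (a i * Real.log (a i) - ∑ j, a i * Real.log (b j) * c i j) :=
        Finset.sum_le_sum fun i _ => key i
    _ = _ := by rw [Finset.sum_sub_distrib]



/-- scalar form of the `tr B log M ≥ tr B log B + log c tr B` inequality. -/
lemma scalar_L3 (a m : n → ℝ) (c : n → n → ℝ) {c' : ℝ} (hc' : 0 < c')
    (ha : ∀ i, 0 ≤ a i) (hm0 : ∀ j, 0 ≤ m j)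
    (hc : ∀ i j, 0 ≤ c i j) (hrow : ∀ i, ∑ j, c i j = 1)
    (hker : ∀ i j, m j = 0 → a i * c i j = 0)
    (hT : ∑ j, ∑ i, (a i) ^ 2 * (m j)⁻¹ * c i j ≤ (∑ i, a i) / c') :
    ∑ i, a i * Real.log (a i) + Real.log c' * ∑ i, a i ≤
      ∑ i, ∑ j, a i * Real.log (m j) * c i j := by
  have key : ∀ i j, a i * (Real.log (a i) + Real.log c' + 1) * c i j
      - c' * ((a i) ^ 2 * (m j)⁻¹ * c i j) ≤ a i * Real.log (m j) * c i j := by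
    intro i j
    rcases eq_or_lt_of_le (ha i) with h0 | hpos
    · rw [← h0]; ring_nf; exact le_refl _
    rcases eq_or_lt_of_le (hc i j) with hc0 | hc0
    · rw [← hc0]; ring_nf; exact le_refl _
    have hmne : m j ≠ 0 := by
      intro h
      have := hker i j h
      rcases mul_eq_zero.mp this with h3 | h3
      · exact absurd h3 (ne_of_gt hpos)
      · exact absurd h3 (ne_of_gt hc0)
    have hm : 0 < m j := lt_of_le_of_ne (hm0 j) (Ne.symm hmne)
    -- log m ≥ log (c' a) + 1 - c' a / m
    have hlog : Real.log (c' * a i) - Real.log (m j) ≤ (c' * a i) / m j - 1 := by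
      have := Real.log_le_sub_one_of_pos (div_pos (mul_pos hc' hpos) hm)
      rwa [Real.log_div (ne_of_gt (mul_pos hc' hpos)) (ne_of_gt hm)] at this
    have hlogsplit : Real.log (c' * a i) = Real.log c' + Real.log (a i) :=
      Real.log_mul (ne_of_gt hc') (ne_of_gt hpos)
    have h1 : Real.log (a i) + Real.log c' + 1 - c' * a i / m j ≤ Real.log (m j) := by
      rw [hlogsplit] at hlog; linarith
    have h2 := mul_le_mul_of_nonneg_left h1 (le_of_lt (mul_pos hpos hc0))
    calc a i * (Real.log (a i) + Real.log c' + 1) * c i j - c' * ((a i) ^ 2 * (m j)⁻¹ * c i j)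
        = (a i * c i j) * (Real.log (a i) + Real.log c' + 1 - c' * a i / m j) := by
          field_simp
      _ ≤ (a i * c i j) * Real.log (m j) := h2
      _ = a i * Real.log (m j) * c i j := by ring
  have hsum := Finset.sum_le_sum (fun i (_ : i ∈ Finset.univ) =>
    Finset.sum_le_sum (fun j (_ : j ∈ Finset.univ) => key i j))
  have lhs_eval : ∑ i, ∑ j, (a i * (Real.log (a i) + Real.log c' + 1) * c i j
      - c' * ((a i) ^ 2 * (m j)⁻¹ * c i j))
      = ∑ i, a i * (Real.log (a i) + Real.log c' + 1)
        - c' * ∑ j, ∑ i, (a i) ^ 2 * (m j)⁻¹ * c i j := by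
    calc ∑ i, ∑ j, (a i * (Real.log (a i) + Real.log c' + 1) * c i j
        - c' * ((a i) ^ 2 * (m j)⁻¹ * c i j))
        = ∑ i, (a i * (Real.log (a i) + Real.log c' + 1)
            - c' * ∑ j, (a i) ^ 2 * (m j)⁻¹ * c i j) := by
          refine Finset.sum_congr rfl fun i _ => ?_
          rw [Finset.sum_sub_distrib, ← Finset.mul_sum, ← Finset.mul_sum, hrow i, mul_one]
      _ = ∑ i, a i * (Real.log (a i) + Real.log c' + 1)
            - c' * ∑ i, ∑ j, (a i) ^ 2 * (m j)⁻¹ * c i j := by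
          rw [Finset.sum_sub_distrib, ← Finset.mul_sum]
      _ = _ := by rw [Finset.sum_comm (f := fun i j => (a i) ^ 2 * (m j)⁻¹ * c i j)]
  rw [lhs_eval] at hsum
  have hT2 : c' * ∑ j, ∑ i, (a i) ^ 2 * (m j)⁻¹ * c i j ≤ ∑ i, a i := by
    have := mul_le_mul_of_nonneg_left hT (le_of_lt hc')
    rwa [mul_div_cancel₀ _ (ne_of_gt hc')] at this
  have expand : ∑ i, a i * (Real.log (a i) + Real.log c' + 1)
      = ∑ i, a i * Real.log (a i) + Real.log c' * ∑ i, a i + ∑ i, a i := by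
    rw [Finset.mul_sum, ← Finset.sum_add_distrib, ← Finset.sum_add_distrib]
    refine Finset.sum_congr rfl fun i _ => by ring
  linarith


lemma w_unitary1 {U V : Matrix n n ℂ} (hU : U * star U = 1) :
    (star U * V) * star (star U * V) = star U * (V * star V) * U := by
  rw [StarMul.star_mul, star_star]
  simp only [Matrix.mul_assoc]

lemma klein {A B : Matrix n n ℂ} (hA : A.PosSemidef) (hB : B.PosSemidef)
    (hker : ∀ x, B *ᵥ x = 0 → A *ᵥ x = 0) :
    A.trace.re - B.trace.re ≤ (A * matLog A).trace.re - (A * matLog B).trace.re := by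
  set U : Matrix n n ℂ := (hA.1.eigenvectorUnitary : Matrix n n ℂ) with hUdef
  set V : Matrix n n ℂ := (hB.1.eigenvectorUnitary : Matrix n n ℂ) with hVdef
  set W : Matrix n n ℂ := star U * V with hWdef
  have hW1 : W * star W = 1 := by
    rw [hWdef, w_unitary1 (mul_star_self_eigen hA.1), mul_star_self_eigen hB.1, Matrix.mul_one,
      star_mul_self_eigen hA.1]
  have hW2 : star W * W = 1 := by
    rw [hWdef, StarMul.star_mul, star_star]
    calc star V * U * (star U * V) = star V * (U * star U) * V := by simp only [Matrix.mul_assoc]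
      _ = 1 := by rw [mul_star_self_eigen hA.1, Matrix.mul_one, star_mul_self_eigen hB.1]
  have h1 : (A * matLog A).trace.re = ∑ i, hA.1.eigenvalues i * Real.log (hA.1.eigenvalues i) := by
    rw [trace_mul_log_self hA.1, Complex.ofReal_re]
  have h2 : (A * matLog B).trace.re = ∑ i, ∑ j, hA.1.eigenvalues i *
      Real.log (hB.1.eigenvalues j) * Complex.normSq (W i j) := by
    rw [trace_mul_log hA.1 hB.1, Complex.ofReal_re]
  have h3 : A.trace.re = ∑ i, hA.1.eigenvalues i := by rw [trace_eig hA.1, Complex.ofReal_re]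
  have h4 : B.trace.re = ∑ j, hB.1.eigenvalues j := by rw [trace_eig hB.1, Complex.ofReal_re]
  rw [h1, h2, h3, h4]
  exact scalar_klein _ _ _ hA.eigenvalues_nonneg hB.eigenvalues_nonneg
    (fun i j => Complex.normSq_nonneg _) (normSq_row_sum hW1) (normSq_col_sum hW2)
    (fun i j hbj => eig_mul_normSq_eq_zero hA.1 hB.1 hker hbj i)

lemma upper_k {A M : Matrix n n ℂ} (hA : A.PosSemidef) (hM : M.PosSemidef) {c' : ℝ}
    (hc' : 0 < c') (hle : (M - (c' : ℂ) • A).PosSemidef) :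
    (A * matLog A).trace.re + Real.log c' * A.trace.re ≤ (A * matLog M).trace.re := by
  set U : Matrix n n ℂ := (hA.1.eigenvectorUnitary : Matrix n n ℂ) with hUdef
  set V : Matrix n n ℂ := (hM.1.eigenvectorUnitary : Matrix n n ℂ) with hVdef
  set W : Matrix n n ℂ := star U * V with hWdef
  set a : n → ℝ := hA.1.eigenvalues with hadef
  set m : n → ℝ := hM.1.eigenvalues with hmdef
  have hW1 : W * star W = 1 := by
    rw [hWdef, w_unitary1 (mul_star_self_eigen hA.1), mul_star_self_eigen hM.1, Matrix.mul_one,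
      star_mul_self_eigen hA.1]
  have hcA := psd_smul hA (le_of_lt hc')
  have hker : ∀ x, M *ᵥ x = 0 → A *ᵥ x = 0 := by
    intro x hx
    have h5 := kernel_incl hcA hle x hx
    rw [Matrix.smul_mulVec] at h5
    have := smul_eq_zero.mp h5
    rcases this with h6 | h6
    · exfalso
      exact (ne_of_gt hc') (by exact_mod_cast h6)
    · exact h6
  -- entry identity
  have hQform : star V * (A * A) * V = star W * diagonal (fun i => ((a i ^ 2 : ℝ) : ℂ)) * W := by
    have h3 := congrArg (fun B => star V * B * V) (mul_self_eigen hA.1)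
    rw [h3, hWdef, StarMul.star_mul, star_star]
    simp only [Matrix.mul_assoc]
    rfl
  have hentry : ∀ j, ((star V * (A * A) * V) j j).re = ∑ i, a i ^ 2 * Complex.normSq (W i j) := by
    intro j
    rw [hQform, entry_conj, Complex.ofReal_re]
  -- the T bound
  have hT0 := Tlem hcA hM hle
  have hsmulsq : ((c' : ℂ) • A) * ((c' : ℂ) • A) = ((c' ^ 2 : ℝ) : ℂ) • (A * A) := by
    rw [Matrix.smul_mul, Matrix.mul_smul, smul_smul]
    norm_cast
    rw [sq]
  rw [hsmulsq] at hT0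
  have hsmulconv : star V * (((c' ^ 2 : ℝ) : ℂ) • (A * A)) * V
      = ((c' ^ 2 : ℝ) : ℂ) • (star V * (A * A) * V) := by
    rw [Matrix.mul_smul, Matrix.smul_mul]
  rw [hsmulconv] at hT0
  have htrsmul : ((c' : ℂ) • A).trace.re = c' * A.trace.re := by
    rw [Matrix.trace_smul, smul_eq_mul, Complex.re_ofReal_mul]
  rw [htrsmul] at hT0
  have hT1 : ∑ j, (c' ^ 2 * ((star V * (A * A) * V) j j).re) * (m j)⁻¹ ≤ c' * A.trace.re := by
    refine le_trans (le_of_eq ?_) hT0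
    refine Finset.sum_congr rfl fun j _ => ?_
    rw [Matrix.smul_apply, smul_eq_mul, Complex.re_ofReal_mul]
  have h3 : A.trace.re = ∑ i, a i := by rw [trace_eig hA.1, Complex.ofReal_re]
  have hS : ∑ j, ((star V * (A * A) * V) j j).re * (m j)⁻¹
      = ∑ j, ∑ i, a i ^ 2 * (m j)⁻¹ * Complex.normSq (W i j) := by
    refine Finset.sum_congr rfl fun j _ => ?_
    rw [hentry j, Finset.sum_mul]
    exact Finset.sum_congr rfl fun i _ => by ring
  have hT2 : ∑ j, ∑ i, a i ^ 2 * (m j)⁻¹ * Complex.normSq (W i j) ≤ (∑ i, a i) / c' := by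
    rw [← hS]
    rw [le_div_iff₀ hc']
    have e1 : ∑ j, (c' ^ 2 * ((star V * (A * A) * V) j j).re) * (m j)⁻¹
        = c' ^ 2 * ∑ j, ((star V * (A * A) * V) j j).re * (m j)⁻¹ := by
      rw [Finset.mul_sum]
      exact Finset.sum_congr rfl fun j _ => by ring
    rw [← h3]
    have h9 : c' * ((∑ j, ((star V * (A * A) * V) j j).re * (m j)⁻¹) * c')
        ≤ c' * A.trace.re := by
      calc c' * ((∑ j, ((star V * (A * A) * V) j j).re * (m j)⁻¹) * c')
          = c' ^ 2 * ∑ j, ((star V * (A * A) * V) j j).re * (m j)⁻¹ := by ring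
        _ ≤ c' * A.trace.re := by rw [← e1]; exact hT1
    exact le_of_mul_le_mul_left h9 hc'
  have hfin := scalar_L3 a m (fun i j => Complex.normSq (W i j)) hc'
    hA.eigenvalues_nonneg hM.eigenvalues_nonneg (fun i j => Complex.normSq_nonneg _)
    (normSq_row_sum hW1) (fun i j hmj => eig_mul_normSq_eq_zero hA.1 hM.1 hker hmj i)
    (by exact_mod_cast hT2)
  have h1 : (A * matLog A).trace.re = ∑ i, a i * Real.log (a i) := by
    rw [trace_mul_log_self hA.1, Complex.ofReal_re]
  have h2 : (A * matLog M).trace.re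
      = ∑ i, ∑ j, a i * Real.log (m j) * Complex.normSq (W i j) := by
    rw [trace_mul_log hA.1 hM.1, Complex.ofReal_re]
  rw [h1, h2, h3]
  exact hfin

lemma psd_sum {ι : Type*} (s : Finset ι) (f : ι → Matrix n n ℂ)
    (h : ∀ k ∈ s, (f k).PosSemidef) : (∑ k ∈ s, f k).PosSemidef := by
  exact Finset.sum_induction f _ (fun a b ha hb => ha.add hb) Matrix.PosSemidef.zero h


end RBC

open RBC Matrix

theorem relEntropy_bounded_concavity {dI dO K : ℕ}
    (𝓜 𝓝 : Matrix (Fin dI) (Fin dI) ℂ →ₗ[ℂ] Matrix (Fin dO) (Fin dO) ℂ)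
    (h𝓜pos : ∀ X : Matrix (Fin dI) (Fin dI) ℂ, X.PosSemidef → (𝓜 X).PosSemidef)
    (h𝓜tr : ∀ X : Matrix (Fin dI) (Fin dI) ℂ, (𝓜 X).trace = X.trace)
    (h𝓝pos : ∀ X : Matrix (Fin dI) (Fin dI) ℂ, X.PosSemidef → (𝓝 X).PosSemidef)
    (h𝓝tr : ∀ X : Matrix (Fin dI) (Fin dI) ℂ, (𝓝 X).trace = X.trace)
    (σ : Matrix (Fin dI) (Fin dI) ℂ) (hσ : IsState σ)
    (lam : Fin K → ℝ) (hlam0 : ∀ k, 0 ≤ lam k) (hlam1 : ∑ k, lam k = 1)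
    (ρs : Fin K → Matrix (Fin dI) (Fin dI) ℂ) (hρs : ∀ k, IsState (ρs k))
    (hsupp : ∀ k, 0 < lam k →
      LinearMap.range (Matrix.toLin' (𝓜 (ρs k))) ≤ LinearMap.range (Matrix.toLin' (𝓝 σ))) :
    0 ≤ (∑ k, lam k * qRelEntropyR (𝓜 (ρs k)) (𝓝 σ))
        - qRelEntropyR (𝓜 (∑ k, lam k • ρs k)) (𝓝 σ) ∧
      (∑ k, lam k * qRelEntropyR (𝓜 (ρs k)) (𝓝 σ))
        - qRelEntropyR (𝓜 (∑ k, lam k • ρs k)) (𝓝 σ) ≤ shannonEntropy lam := by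
  classical
  set ν := 𝓝 σ with hν
  set μk : Fin K → Matrix (Fin dO) (Fin dO) ℂ := fun k => 𝓜 (ρs k) with hμkdef
  set μ := 𝓜 (∑ k, lam k • ρs k) with hμdef
  have hsmul : ∀ (k : Fin K) (X : Matrix (Fin dI) (Fin dI) ℂ),
      lam k • X = (lam k : ℂ) • X := by
    intro k X
    ext i j
    simp [Matrix.smul_apply, Complex.real_smul]
  have hμsum : μ = ∑ k, (lam k : ℂ) • μk k := by
    rw [hμdef, map_sum]
    refine Finset.sum_congr rfl fun k _ => ?_
    rw [hsmul k]
    exact LinearMap.map_smul 𝓜 _ _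
  have hμkpsd : ∀ k, (μk k).PosSemidef := fun k => h𝓜pos _ (hρs k).1
  have hμktr : ∀ k, (μk k).trace = 1 := fun k => by
    rw [hμkdef]; simp only []; rw [h𝓜tr]; exact (hρs k).2
  have hρpsd : (∑ k, lam k • ρs k).PosSemidef := by
    refine psd_sum _ _ fun k _ => ?_
    rw [hsmul k]
    exact psd_smul (hρs k).1 (hlam0 k)
  have hμpsd : μ.PosSemidef := h𝓜pos _ hρpsd
  have hμtr : μ.trace = 1 := by
    rw [hμdef, h𝓜tr, Matrix.trace_sum]
    have : ∀ k, (lam k • ρs k).trace = ((lam k : ℝ) : ℂ) := fun k => by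
      rw [Matrix.trace_smul, (hρs k).2, Complex.real_smul, mul_one]
    rw [Finset.sum_congr rfl fun k _ => this k]
    rw [← Complex.ofReal_sum, hlam1, Complex.ofReal_one]
  -- expand qRelEntropyR
  have hqR : ∀ (X L : Matrix (Fin dO) (Fin dO) ℂ), qRelEntropyR X L
      = (X * matLog X).trace.re - (X * matLog L).trace.re := by
    intro X L
    rw [qRelEntropyR, Matrix.mul_sub, Matrix.trace_sub, Complex.sub_re]
  -- linearity of traces against a fixed matrix
  have hlin : ∀ L : Matrix (Fin dO) (Fin dO) ℂ,
      (μ * L).trace.re = ∑ k, lam k * ((μk k) * L).trace.re := by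
    intro L
    rw [hμsum, Matrix.sum_mul, Matrix.trace_sum, Complex.re_sum]
    refine Finset.sum_congr rfl fun k _ => ?_
    rw [Matrix.smul_mul, Matrix.trace_smul, smul_eq_mul, Complex.re_ofReal_mul]
  -- the difference identity
  have hdiff : (∑ k, lam k * qRelEntropyR (μk k) ν) - qRelEntropyR μ ν
      = ∑ k, lam k * ((μk k * matLog (μk k)).trace.re - (μk k * matLog μ).trace.re) := by
    rw [hqR μ ν, hlin (matLog ν), hlin (matLog μ)]
    rw [Finset.sum_congr rfl fun k _ => congrArg (fun z => lam k * z) (hqR (μk k) ν)]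
    rw [Finset.sum_congr rfl fun (k : Fin K) _ => mul_sub (lam k)
      ((μk k * matLog (μk k)).trace.re) ((μk k * matLog ν).trace.re)]
    rw [Finset.sum_congr rfl fun (k : Fin K) _ => mul_sub (lam k)
      ((μk k * matLog (μk k)).trace.re) ((μk k * matLog μ).trace.re)]
    rw [Finset.sum_sub_distrib, Finset.sum_sub_distrib]
    ring
  -- positivity of the coefficient matrices minus
  have hle : ∀ k : Fin K, (μ - (lam k : ℂ) • μk k).PosSemidef := by
    intro k
    have hsplit : μ = (lam k : ℂ) • μk k + ∑ k' ∈ Finset.univ.erase k, (lam k' : ℂ) • μk k' := by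
      rw [hμsum, ← Finset.add_sum_erase _ _ (Finset.mem_univ k)]
    rw [hsplit, add_sub_cancel_left]
    exact psd_sum _ _ fun k' _ => psd_smul (hμkpsd k') (hlam0 k')
  have hker : ∀ k : Fin K, 0 < lam k → ∀ x, μ *ᵥ x = 0 → (μk k) *ᵥ x = 0 := by
    intro k hk x hx
    have h5 := kernel_incl (psd_smul (hμkpsd k) (hlam0 k)) (hle k) x hx
    rw [Matrix.smul_mulVec] at h5
    rcases smul_eq_zero.mp h5 with h6 | h6
    · exact absurd (by exact_mod_cast h6 : lam k = 0) (ne_of_gt hk)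
    · exact h6
  have htrk : ∀ k, (μk k).trace.re = 1 := fun k => by rw [hμktr k]; rfl
  have htrμ : μ.trace.re = 1 := by rw [hμtr]; rfl
  constructor
  · rw [hdiff]
    apply Finset.sum_nonneg
    intro k _
    rcases eq_or_lt_of_le (hlam0 k) with h0 | hpos
    · rw [← h0, zero_mul]
    · apply mul_nonneg (le_of_lt hpos)
      have hkl := klein (hμkpsd k) hμpsd (hker k hpos)
      rw [htrk k, htrμ] at hkl
      linarith
  · rw [hdiff, shannonEntropy, ← Finset.sum_neg_distrib]
    apply Finset.sum_le_sum
    intro k _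
    rcases eq_or_lt_of_le (hlam0 k) with h0 | hpos
    · rw [← h0]
      simp
    · have hup := upper_k (hμkpsd k) hμpsd hpos (hle k)
      rw [htrk k, mul_one] at hup
      have h7 : (μk k * matLog (μk k)).trace.re - (μk k * matLog μ).trace.re
          ≤ -Real.log (lam k) := by linarith
      calc lam k * ((μk k * matLog (μk k)).trace.re - (μk k * matLog μ).trace.re)
          ≤ lam k * (-Real.log (lam k)) :=
            mul_le_mul_of_nonneg_left h7 (le_of_lt hpos)
        _ = -(lam k * Real.log (lam k)) := by ring
end
end
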